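/- The Miyashita–Ulbrich action formula for the generator E acting on X: in A^τ_{μν}, the element q^{1/2}(q⁻¹−q)·π(E(FK)K⁻¹ + K⁻¹(FK)(−qE)) equals q^{1/2}τ·1 − q^{1/2}(1+q²)μ·π(K²). -/

import Mathlib

/-- the Miyashita–Ulbrich action formula E ▷ X.  In A^τ_{μν} (formalized:
in any unital ℂ-algebra with elements K, K⁻¹, E, F satisfying the defining relations of
U_q(μ,ν) together with the Casimir relation C = τq⁻¹λ²·1), one has
q^{1/2}(q⁻¹−q)·(E(FK)K⁻¹ + K⁻¹(FK)(−qE)) = q^{1/2}τ·1 − q^{1/2}(1+q²)μ·K². -/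
theorem MU_action_E_on_X
    {A : Type*} [Ring A] [Algebra ℂ A]
    (q μ ν τ : ℝ) (hq0 : 0 < q) (hq1 : q < 1)
    (lam : ℝ) (hlam : lam = (q - q⁻¹)⁻¹)
    (K Kinv E F : A)
    (hKinvK : Kinv * K = 1) (hKKinv : K * Kinv = 1)
    (hKE : K * E = (q : ℂ) • (E * K))
    (hKF : K * F = ((q⁻¹ : ℝ) : ℂ) • (F * K))
    (hEF : E * F - F * E =
      (lam : ℂ) • ((μ : ℂ) • (K * K) - (ν : ℂ) • (Kinv * Kinv)))
    (hCas : E * F + ((lam ^ 2 * q⁻¹ * μ : ℝ) : ℂ) • (K * K)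
              + ((lam ^ 2 * q * ν : ℝ) : ℂ) • (Kinv * Kinv)
            = algebraMap ℂ A ((τ * q⁻¹ * lam ^ 2 : ℝ) : ℂ)) :
    ((Real.sqrt q * (q⁻¹ - q) : ℝ) : ℂ) •
        (E * (F * K) * Kinv + Kinv * (F * K) * (-((q : ℂ) • E)))
      = algebraMap ℂ A ((Real.sqrt q * τ : ℝ) : ℂ)
        - ((Real.sqrt q * (1 + q ^ 2) * μ : ℝ) : ℂ) • (K * K) := by

  have hq : (q:ℝ) ≠ 0 := hq0.ne'
  have hqd : q - q⁻¹ ≠ 0 := by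
    have h1 : 1 < q⁻¹ := (one_lt_inv₀ hq0 |>.mpr hq1)
    linarith
  have hlamne : lam ≠ 0 := by rw [hlam]; exact inv_ne_zero hqd
  have hqC : (q:ℂ) ≠ 0 := by exact_mod_cast hq
  have hqdC : (q:ℂ) - (q:ℂ)⁻¹ ≠ 0 := by
    have : (((q - q⁻¹ : ℝ)) : ℂ) ≠ 0 := by exact_mod_cast hqd
    push_cast at this
    exact this
  -- F * K = q • (K * F)
  have hFK : F * K = (q : ℂ) • (K * F) := by
    rw [hKF, smul_smul]
    have : (q : ℂ) * ((q⁻¹ : ℝ) : ℂ) = 1 := by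
      push_cast
      field_simp [hqC]
    rw [this, one_smul]
  have hKinvFK : Kinv * (F * K) = (q : ℂ) • F := by
    rw [hFK, mul_smul_comm, ← mul_assoc, hKinvK, one_mul]
  have hEFK : E * (F * K) * Kinv = E * F := by
    rw [← mul_assoc, mul_assoc (E * F) K Kinv, hKKinv, mul_one]
  have hFE : F * E = E * F - (lam : ℂ) • ((μ : ℂ) • (K * K) - (ν : ℂ) • (Kinv * Kinv)) := by
    rw [← hEF]; abel
  have hEFval : E * F = ((τ * q⁻¹ * lam ^ 2 : ℝ) : ℂ) • (1 : A)
      - ((lam ^ 2 * q⁻¹ * μ : ℝ) : ℂ) • (K * K)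
      - ((lam ^ 2 * q * ν : ℝ) : ℂ) • (Kinv * Kinv) := by
    rw [← Algebra.algebraMap_eq_smul_one, ← hCas]; abel
  rw [hEFK, hKinvFK, Algebra.algebraMap_eq_smul_one]
  have hsecond : ((q : ℂ) • F) * (-((q : ℂ) • E)) = -(((q : ℂ) * q) • (F * E)) := by
    rw [mul_neg, smul_mul_smul_comm]
  rw [hsecond, hFE, hEFval]
  have hq2 : (q:ℂ)^2 - 1 ≠ 0 := by
    have h : q^2 - 1 ≠ 0 := by nlinarith
    have h2 : ((q^2 - 1 : ℝ) : ℂ) ≠ 0 := by exact_mod_cast h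
    push_cast at h2
    exact h2
  have hrw : (q:ℂ) - (q:ℂ)⁻¹ = ((q:ℂ)^2 - 1)/q := by field_simp
  subst hlam
  match_scalars
  · push_cast; rw [hrw]; field_simp; ring
  · push_cast; rw [hrw]; rw [inv_div]
    field_simp
    ring
  · push_cast; rw [hrw]; field_simp; ring
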